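/- Let K be a field of characteristic zero and let R = K⟦u_1, …, u_r⟧ be the ring of formal power series in r variables over K. For i = 1, …, r let E_i : R → R be the Euler operator u_i·∂/∂u_i, i.e. the K-linear map determined by coeff_γ(E_i f) = γ_i · coeff_γ(f) for every f ∈ R and γ ∈ ℕ^r. If I ⊆ R is an ideal with E_i(I) ⊆ I for every i = 1, …, r, then I is generated by the monomials it contains; that is, I equals the ideal of R generated by {u^γ : γ ∈ ℕ^r, u^γ ∈ I}. -/

import Mathlib

open MvPowerSeries

section EulerAux

variable {K : Type*} [Field K] [CharZero K] {r : ℕ}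

/-- Applying a finite product of operators `E i - k` to an element of an Euler-closed ideal. -/
lemma euler_exists_iterate (E : Fin r → (MvPowerSeries (Fin r) K →ₗ[K] MvPowerSeries (Fin r) K))
    (hE : ∀ (i : Fin r) (f : MvPowerSeries (Fin r) K) (γ : Fin r →₀ ℕ),
      MvPowerSeries.coeff γ (E i f) = (γ i : K) * MvPowerSeries.coeff γ f)
    (I : Ideal (MvPowerSeries (Fin r) K))
    (hI : ∀ i : Fin r, ∀ f ∈ I, E i f ∈ I)
    (f : MvPowerSeries (Fin r) K) (hf : f ∈ I) (s : Finset ((Σ _ : Fin r, ℕ))) :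
    ∃ g ∈ I, ∀ γ : Fin r →₀ ℕ,
      MvPowerSeries.coeff γ g
        = (∏ p ∈ s, ((γ p.1 : K) - (p.2 : K))) * MvPowerSeries.coeff γ f := by
  classical
  induction s using Finset.induction with
  | empty => exact ⟨f, hf, by simp⟩
  | @insert a s ha ih =>
    obtain ⟨g, hgI, hg⟩ := ih
    refine ⟨E a.1 g - (a.2 : K) • g, sub_mem (hI a.1 g hgI) (Submodule.smul_of_tower_mem I _ hgI),
      fun γ => ?_⟩
    rw [map_sub, hE a.1 g γ, MvPowerSeries.coeff_smul, hg γ, Finset.prod_insert ha]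
    ring

/-- Key step: any monomial appearing in an element of an Euler-closed ideal
belongs to the ideal. -/
lemma euler_monomial_mem (E : Fin r → (MvPowerSeries (Fin r) K →ₗ[K] MvPowerSeries (Fin r) K))
    (hE : ∀ (i : Fin r) (f : MvPowerSeries (Fin r) K) (γ : Fin r →₀ ℕ),
      MvPowerSeries.coeff γ (E i f) = (γ i : K) * MvPowerSeries.coeff γ f)
    (I : Ideal (MvPowerSeries (Fin r) K))
    (hI : ∀ i : Fin r, ∀ f ∈ I, E i f ∈ I)
    (f : MvPowerSeries (Fin r) K) (hf : f ∈ I) (γ0 : Fin r →₀ ℕ)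
    (h0 : MvPowerSeries.coeff γ0 f ≠ 0) :
    MvPowerSeries.monomial γ0 (1 : K) ∈ I := by
  classical
  obtain ⟨g, hgI, hg⟩ := euler_exists_iterate E hE I hI f hf
    ((Finset.univ : Finset (Fin r)).sigma fun i => Finset.range (γ0 i))
  have hcprod : ∀ γ : Fin r →₀ ℕ,
      (∏ p ∈ ((Finset.univ : Finset (Fin r)).sigma fun i => Finset.range (γ0 i)),
        ((γ p.1 : K) - (p.2 : K)))
      = ∏ i : Fin r, ∏ k ∈ Finset.range (γ0 i), ((γ i : K) - (k : K)) := by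
    intro γ
    exact Finset.prod_sigma _ _ _
  have key1 : ∀ γ : Fin r →₀ ℕ, ¬ γ0 ≤ γ →
      (∏ p ∈ ((Finset.univ : Finset (Fin r)).sigma fun i => Finset.range (γ0 i)),
        ((γ p.1 : K) - (p.2 : K))) = 0 := by
    intro γ hle
    rw [Finsupp.le_def] at hle
    push_neg at hle
    obtain ⟨i, hi⟩ := hle
    rw [hcprod]
    refine Finset.prod_eq_zero (Finset.mem_univ i) ?_
    refine Finset.prod_eq_zero (Finset.mem_range.2 hi) ?_
    simp
  have key2 :
      (∏ p ∈ ((Finset.univ : Finset (Fin r)).sigma fun i => Finset.range (γ0 i)),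
        ((γ0 p.1 : K) - (p.2 : K))) ≠ 0 := by
    rw [hcprod]
    refine Finset.prod_ne_zero_iff.2 fun i _ => Finset.prod_ne_zero_iff.2 fun k hk => ?_
    rw [Finset.mem_range] at hk
    have : (γ0 i : K) ≠ (k : K) := by
      exact_mod_cast hk.ne'
    exact sub_ne_zero.2 this
  -- the quotient of g by the monomial
  set w : MvPowerSeries (Fin r) K := fun δ => MvPowerSeries.coeff (γ0 + δ) g with hw
  have hwcoeff : ∀ δ, MvPowerSeries.coeff δ w = MvPowerSeries.coeff (γ0 + δ) g :=
    fun δ => rfl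
  have hgw : g = MvPowerSeries.monomial γ0 1 * w := by
    ext γ
    rw [MvPowerSeries.coeff_monomial_mul]
    by_cases h : γ0 ≤ γ
    · rw [if_pos h, one_mul, hwcoeff, add_tsub_cancel_of_le h]
    · rw [if_neg h, hg γ, key1 γ h, zero_mul]
  have hw0 : MvPowerSeries.constantCoeff w ≠ 0 := by
    rw [← MvPowerSeries.coeff_zero_eq_constantCoeff_apply, hwcoeff, add_zero, hg γ0]
    exact mul_ne_zero key2 h0
  have hunit : IsUnit w := MvPowerSeries.isUnit_iff_constantCoeff.2 (isUnit_iff_ne_zero.2 hw0)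
  obtain ⟨u, hu⟩ := hunit
  have : MvPowerSeries.monomial γ0 (1 : K) = g * ↑u⁻¹ := by
    rw [hgw, mul_assoc, ← hu, Units.mul_inv, mul_one]
  rw [this]
  exact I.mul_mem_right _ hgI

end EulerAux

/-- If an ideal of a formal power series ring over a field of characteristic zero is closed
under all Euler operators `u_i ∂/∂u_i`, then it is generated by the monomials it contains. -/
theorem euler_closed_ideal_monomially_generated {K : Type*} [Field K] [CharZero K] (r : ℕ)
    (E : Fin r → (MvPowerSeries (Fin r) K →ₗ[K] MvPowerSeries (Fin r) K))
    (hE : ∀ (i : Fin r) (f : MvPowerSeries (Fin r) K) (γ : Fin r →₀ ℕ),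
      MvPowerSeries.coeff γ (E i f) = (γ i : K) * MvPowerSeries.coeff γ f)
    (I : Ideal (MvPowerSeries (Fin r) K))
    (hI : ∀ i : Fin r, ∀ f ∈ I, E i f ∈ I) :
    I = Ideal.span {f : MvPowerSeries (Fin r) K |
      (∃ γ : Fin r →₀ ℕ, f = MvPowerSeries.monomial γ (1 : K)) ∧ f ∈ I} := by
  classical
  refine le_antisymm (fun f hf => ?_) (Ideal.span_le.2 fun p hp => hp.2)
  -- the support of f
  set T : Set (Fin r →₀ ℕ) := {γ | MvPowerSeries.coeff γ f ≠ 0} with hT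
  have hPWO : T.IsPWO := Set.isPWO_of_wellQuasiOrderedLE T
  -- minimal elements of T
  set M : Set (Fin r →₀ ℕ) := {γ | γ ∈ T ∧ ∀ δ ∈ T, ¬ δ < γ} with hM
  have hMsub : M ⊆ T := fun γ hγ => hγ.1
  have hanti : IsAntichain (· ≤ ·) M := by
    intro a ha b hb hab hle
    exact hb.2 a ha.1 (lt_of_le_of_ne hle hab)
  have hMfin : M.Finite :=
    hanti.finite_of_partiallyWellOrderedOn (hPWO.mono hMsub)
  have hmin : ∀ γ ∈ T, ∃ m ∈ M, m ≤ γ := by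
    intro γ hγ
    obtain ⟨m, hm, hmmin⟩ := (wellFounded_lt (α := Fin r →₀ ℕ)).has_min
      {δ ∈ T | δ ≤ γ} ⟨γ, hγ, le_refl γ⟩
    exact ⟨m, ⟨hm.1, fun δ hδ hlt => hmmin δ ⟨hδ, hlt.le.trans hm.2⟩ hlt⟩, hm.2⟩
  -- choose a minimal element below each element of T
  have hch' : ∀ γ : Fin r →₀ ℕ, ∃ m, γ ∈ T → (m ∈ M ∧ m ≤ γ) := by
    intro γ
    by_cases h : γ ∈ T
    · obtain ⟨m, hm, hle⟩ := hmin γ h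
      exact ⟨m, fun _ => ⟨hm, hle⟩⟩
    · exact ⟨0, fun h' => absurd h' h⟩
  choose ch hch using hch'
  set B : Finset (Fin r →₀ ℕ) := hMfin.toFinset with hB
  -- the pieces of the decomposition of f
  set F : (Fin r →₀ ℕ) → MvPowerSeries (Fin r) K := fun b =>
    fun δ => if (b + δ) ∈ T ∧ ch (b + δ) = b then MvPowerSeries.coeff (b + δ) f else 0
    with hF
  have hFcoeff : ∀ b δ, MvPowerSeries.coeff δ (F b)
      = if (b + δ) ∈ T ∧ ch (b + δ) = b then MvPowerSeries.coeff (b + δ) f else 0 :=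
    fun b δ => rfl
  have heq : f = ∑ b ∈ B, MvPowerSeries.monomial b 1 * F b := by
    ext γ
    rw [map_sum]
    have hterm : ∀ b : Fin r →₀ ℕ,
        MvPowerSeries.coeff γ (MvPowerSeries.monomial b 1 * F b)
          = if b ≤ γ ∧ γ ∈ T ∧ ch γ = b then MvPowerSeries.coeff γ f else 0 := by
      intro b
      rw [MvPowerSeries.coeff_monomial_mul]
      by_cases h : b ≤ γ
      · rw [if_pos h, one_mul, hFcoeff, add_tsub_cancel_of_le h]
        by_cases h2 : γ ∈ T ∧ ch γ = b
        · rw [if_pos h2, if_pos ⟨h, h2⟩]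
        · rw [if_neg h2, if_neg (by tauto)]
      · rw [if_neg h, if_neg (by tauto)]
    simp only [hterm]
    by_cases hγ : γ ∈ T
    · obtain ⟨hmem, hle⟩ := hch γ hγ
      rw [Finset.sum_eq_single (ch γ)]
      · rw [if_pos ⟨hle, hγ, rfl⟩]
      · intro b hb hbne
        rw [if_neg (by tauto)]
      · intro h
        exact absurd (hMfin.mem_toFinset.2 hmem) h
    · rw [Finset.sum_eq_zero (fun b _ => by rw [if_neg (by tauto)])]
      exact not_not.1 hγ
  rw [heq]
  refine Ideal.sum_mem _ fun b hb => Ideal.mul_mem_right _ _ (Ideal.subset_span ?_)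
  have hbT : b ∈ T := hMsub (hMfin.mem_toFinset.1 hb)
  exact ⟨⟨b, rfl⟩, euler_monomial_mem E hE I hI f hf b hbT⟩
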